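/- Let A be a commutative associative unital algebra with a Jordan bracket, Z_p its Poisson center, λ: A → F linear. Define on J = K(A) = A ⊕ Av the bilinear form (A|A)_λ = (Av|A)_λ = 0, (av|bv)_λ = λ(ab). Then (·|·)_λ is a cyclic cocycle on J, and it is a coboundary (i.e. of the form μ(D(x,y)) for a linear functional μ on Inder(J)) if and only if λ(Z_p) = 0. -/

import Mathlib

/-- Multiplication of the Kantor double `J = K(A) = A ⊕ Av` (with `A` purely even). -/
def kmul {F A : Type*} [Field F] [CommRing A] [Algebra F A]
    (br : A →ₗ[F] A →ₗ[F] A) (x y : A × A) : A × A :=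
  (x.1 * y.1 + br x.2 y.2, x.1 * y.2 + x.2 * y.1)

/-- A (super) cyclic cocycle on the Kantor double `J = A ⊕ Av`, recorded by its blocks
`Bee = (A|A)`, `Beo = (A|Av)`, `Boo = (Av|Av)` (with `(Av|A)` determined by super
skew-symmetry): super skew-symmetry together with the super cyclic cocycle identity
`(xy|z) + (-1)^{|x|(|y|+|z|)}(yz|x) + (-1)^{|y||z|}(xz|y) = 0` on homogeneous triples. -/
def IsKantorCyclicCocycle {F A : Type*} [Field F] [CommRing A] [Algebra F A]
    (br : A →ₗ[F] A →ₗ[F] A) (Bee Beo Boo : A →ₗ[F] A →ₗ[F] F) : Prop :=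
  (∀ a b : A, Bee a b = - Bee b a) ∧
  (∀ a b : A, Boo a b = Boo b a) ∧
  -- triple of even elements a, b, c
  (∀ a b c : A, Bee (a * b) c + Bee (b * c) a + Bee (a * c) b = 0) ∧
  -- triple a, b, cv
  (∀ a b c : A, Beo (a * b) c - Beo a (b * c) - Beo b (a * c) = 0) ∧
  -- triple av, bv, c
  (∀ a b c : A, Bee (br a b) c - Boo (b * c) a + Boo (a * c) b = 0) ∧
  -- triple av, bv, cv
  (∀ a b c : A, Beo (br a b) c + Beo (br b c) a - Beo (br a c) b = 0)

/-- `D(a,b) = R(a)R(b) - R(b)R(a)` for two even elements of the Kantor double. -/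
def kDee {F A : Type*} [Field F] [CommRing A] [Algebra F A]
    (br : A →ₗ[F] A →ₗ[F] A) (a b : A) : A × A → A × A :=
  fun z => kmul br (kmul br z (a, 0)) (b, 0) - kmul br (kmul br z (b, 0)) (a, 0)

/-- `D(a,bv) = R(a)R(bv) - R(bv)R(a)` for an even and an odd element. -/
def kDeo {F A : Type*} [Field F] [CommRing A] [Algebra F A]
    (br : A →ₗ[F] A →ₗ[F] A) (a b : A) : A × A → A × A :=
  fun z => kmul br (kmul br z (a, 0)) (0, b) - kmul br (kmul br z (0, b)) (a, 0)

/-- `D(av,bv) = R(av)R(bv) + R(bv)R(av)` for two odd elements (super convention). -/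
def kDoo {F A : Type*} [Field F] [CommRing A] [Algebra F A]
    (br : A →ₗ[F] A →ₗ[F] A) (a b : A) : A × A → A × A :=
  fun z => kmul br (kmul br z (0, a)) (0, b) + kmul br (kmul br z (0, b)) (0, a)

/-- `Inder(K(A))`: the span of all inner derivations of the Kantor double. -/
def kInder (F : Type*) {A : Type*} [Field F] [CommRing A] [Algebra F A]
    (br : A →ₗ[F] A →ₗ[F] A) : Submodule F (A × A → A × A) :=
  Submodule.span F ({f | ∃ a b : A, f = kDee br a b} ∪ {f | ∃ a b : A, f = kDeo br a b}
    ∪ {f | ∃ a b : A, f = kDoo br a b})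

/-- A cyclic cocycle on the Kantor double (given by blocks `Bee`, `Beo`, `Boo`) is a
coboundary if it is of the form `(x|y) = μ(D(x,y))` for a linear functional `μ` on
`Inder(K(A))`. -/
def IsKantorCoboundary {F A : Type*} [Field F] [CommRing A] [Algebra F A]
    (br : A →ₗ[F] A →ₗ[F] A) (Bee Beo Boo : A →ₗ[F] A →ₗ[F] F) : Prop :=
  ∃ μ : kInder F br →ₗ[F] F,
    (∀ a b : A, Bee a b = μ ⟨kDee br a b,
      Submodule.subset_span (Set.mem_union_left _ (Set.mem_union_left _ ⟨a, b, rfl⟩))⟩) ∧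
    (∀ a b : A, Beo a b = μ ⟨kDeo br a b,
      Submodule.subset_span (Set.mem_union_left _ (Set.mem_union_right _ ⟨a, b, rfl⟩))⟩) ∧
    (∀ a b : A, Boo a b = μ ⟨kDoo br a b,
      Submodule.subset_span (Set.mem_union_right _ ⟨a, b, rfl⟩)⟩)


section Aux
variable {F A : Type*} [Field F] [CommRing A] [Algebra F A] (br : A →ₗ[F] A →ₗ[F] A)

lemma kDee_eq_zero (a b : A) : kDee br a b = 0 := by
  funext z
  obtain ⟨z1, z2⟩ := z
  simp only [kDee, kmul, map_zero, LinearMap.map_zero₂, mul_zero, zero_mul, add_zero, zero_add,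
    Pi.zero_apply]
  rw [Prod.ext_iff]
  constructor <;> simp <;> ring

lemma kDoo_apply (a b z1 z2 : A) :
    kDoo br a b (z1, z2) = (br (z1*a) b + br (z1*b) a, br z2 a * b + br z2 b * a) := by
  simp only [kDoo, kmul, map_zero, LinearMap.map_zero₂, mul_zero, zero_mul, add_zero, zero_add,
    Pi.add_apply]
  rw [Prod.ext_iff]
  constructor <;> simp <;> ring

lemma kDeo_apply (a b z1 z2 : A) :
    kDeo br a b (z1, z2) = (br (z2*a) b - br z2 b * a, 0) := by
  simp only [kDeo, kmul, map_zero, LinearMap.map_zero₂, mul_zero, zero_mul, add_zero, zero_add]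
  rw [Prod.ext_iff]
  constructor <;> simp <;> ring

end Aux
/-- for a linear functional `λ : A → F`, the form on `J = K(A)` given by
`(A|A)_λ = (Av|A)_λ = 0`, `(av|bv)_λ = λ(ab)` is a cyclic cocycle on `J`, and it is a
coboundary iff `λ` vanishes on the Poisson center `Z_p`. -/
theorem stmt13 (F : Type*) [Field F] [CharZero F]
    (A : Type*) [CommRing A] [Algebra F A]
    (br : A →ₗ[F] A →ₗ[F] A)
    -- `[·,·]` is a Jordan bracket on `A` (all elements even)
    (halt : ∀ a : A, br a a = 0)
    (hjac : ∀ a b c : A, br (br a b) c + br (br b c) a + br (br c a) b = 0)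
    (hleib : ∀ a b c : A, br (a * b) c = a * br b c + br a c * b + a * b * br c 1)
    (lam : A →ₗ[F] F) :
    IsKantorCyclicCocycle br 0 0 ((LinearMap.mul F A).compr₂ lam) ∧
    (IsKantorCoboundary br 0 0 ((LinearMap.mul F A).compr₂ lam) ↔
      ∀ u : A, (br u 1 = 0 ∧ ∀ c : A, br (c * u) 1 + br c u = 0) → lam u = 0) := by
  have hskew : ∀ x y : A, br x y = - br y x := by
    intro x y
    have h := halt (x + y)
    simp only [map_add, LinearMap.add_apply, halt x, halt y, zero_add, add_zero] at h
    linear_combination h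
  have hd : ∀ x y : A, br (x*y) 1 = x * br y 1 + br x 1 * y := by
    intro x y
    rw [hleib x y 1, halt 1]
    ring
  constructor
  · refine ⟨fun a b => by simp, fun a b => ?_, fun a b c => by simp, fun a b c => by simp,
      fun a b c => ?_, fun a b c => by simp⟩
    · simp only [LinearMap.compr₂_apply, LinearMap.mul_apply', mul_comm]
    · simp only [LinearMap.zero_apply, LinearMap.compr₂_apply, LinearMap.mul_apply', zero_sub]
      have h : b * c * a = a * c * b := by ring
      rw [h]
      ring
  constructor
  · rintro ⟨μ, hBee, hBeo, hBoo⟩ u ⟨hu1, hu2⟩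
    have hz : ∀ z : A, br z u = - (br z 1 * u) := by
      intro z
      linear_combination hu2 z - hd z u - z * hu1
    have hkd : kDoo br u 1 = 0 := by
      funext z
      obtain ⟨z1, z2⟩ := z
      rw [kDoo_apply]
      have e1 : br (z1*u) 1 + br (z1*1) u = 0 := by
        rw [mul_one]; exact hu2 z1
      have e2 : br z2 u * 1 + br z2 1 * u = 0 := by
        rw [hz z2]; ring
      simp only [Pi.zero_apply, Prod.ext_iff]
      exact ⟨e1, e2⟩
    have hval := hBoo u 1
    have h0 : ∀ hm : kDoo br u 1 ∈ kInder F br, (⟨kDoo br u 1, hm⟩ : kInder F br) = 0 :=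
      fun hm => Subtype.ext hkd
    erw [h0, map_zero] at hval
    simpa using hval
  · intro hvan
    classical
    set G : Set ((A × A → A × A) × A) :=
      {p | ∃ a b : A, p = (kDoo br a b, a*b)} ∪ {p | ∃ a b : A, p = (kDeo br a b, 0)} with hGdef
    have hWP : ∀ x ∈ Submodule.span F G, 
        (∀ z : A, (x.1 (z, 0)).1 - (x.1 (0, z)).2 = z * br x.2 1) ∧
        (∀ z : A, br x.2 z = x.2 * br z 1 - (x.1 (0, z)).2) := by
      intro x hx
      induction hx using Submodule.span_induction with
      | mem x hx =>
        rw [hGdef] at hx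
        rcases hx with ⟨a, b, rfl⟩ | ⟨a, b, rfl⟩
        · constructor
          · intro z
            simp only [kDoo_apply]
            linear_combination hleib z a b + hleib z b a + z * hskew a b - z * hd a b
          · intro z
            simp only [kDoo_apply]
            linear_combination hleib a b z + b * hskew z a + a * hskew z b
        · constructor
          · intro z
            simp only [kDeo_apply]
            simp
          · intro z
            simp only [kDeo_apply]
            simp
      | zero => constructor <;> intro z <;> simp
      | add x y hx hy ihx ihy =>
        constructor
        · intro z
          simp only [Prod.fst_add, Prod.snd_add, Pi.add_apply, map_add, LinearMap.add_apply]
          linear_combination ihx.1 z + ihy.1 z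
        · intro z
          simp only [Prod.fst_add, Prod.snd_add, Pi.add_apply, map_add, LinearMap.add_apply]
          linear_combination ihx.2 z + ihy.2 z
      | smul c x hx ih =>
        constructor
        · intro z
          simp only [Prod.smul_fst, Prod.smul_snd, Pi.smul_apply, map_smul,
            LinearMap.smul_apply, mul_smul_comm]
          rw [← smul_sub, ih.1 z]
        · intro z
          simp only [Prod.smul_fst, Prod.smul_snd, Pi.smul_apply, map_smul,
            LinearMap.smul_apply, smul_mul_assoc]
          rw [← smul_sub, ih.2 z]
    set W : Submodule F ((A × A → A × A) × A) := Submodule.span F G with hWdef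
    let p : W →ₗ[F] (A × A → A × A) := (LinearMap.fst F _ _).comp W.subtype
    have hker : LinearMap.ker p ≤
        LinearMap.ker (lam.comp ((LinearMap.snd F (A × A → A × A) A).comp W.subtype)) := by
      intro w hw
      have hT : (w : (A × A → A × A) × A).1 = 0 := LinearMap.mem_ker.mp hw
      have hP := hWP _ w.2
      set u := (w : (A × A → A × A) × A).2 with hu
      have h1 : br u 1 = 0 := by
        have h := hP.2 1
        rw [hT] at h
        simpa [halt 1] using h
      have h2 : ∀ c : A, br (c*u) 1 + br c u = 0 := by
        intro c
        have hc := hP.2 c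
        rw [hT] at hc
        simp only [Pi.zero_apply, Prod.snd_zero, sub_zero] at hc
        linear_combination hd c u + c * h1 + hskew c u - hc
      exact LinearMap.mem_ker.mpr (hvan u ⟨h1, h2⟩)
    have hrange : LinearMap.range p = kInder F br := by
      apply le_antisymm
      · rintro _ ⟨w, rfl⟩
        have hgen : ∀ x ∈ Submodule.span F G, x.1 ∈ kInder F br := by
          intro x hx
          induction hx using Submodule.span_induction with
          | mem x hx =>
            rw [hGdef] at hx
            rcases hx with ⟨a, b, rfl⟩ | ⟨a, b, rfl⟩
            · exact Submodule.subset_span (Set.mem_union_right _ ⟨a, b, rfl⟩)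
            · exact Submodule.subset_span (Set.mem_union_left _ (Set.mem_union_right _ ⟨a, b, rfl⟩))
          | zero => exact (kInder F br).zero_mem
          | add x y hx hy ihx ihy => exact (kInder F br).add_mem ihx ihy
          | smul c x hx ih => exact (kInder F br).smul_mem c ih
        exact hgen _ w.2
      · rw [kInder]
        apply Submodule.span_le.mpr
        rintro f ((⟨a, b, rfl⟩ | ⟨a, b, rfl⟩) | ⟨a, b, rfl⟩)
        · rw [kDee_eq_zero]
          exact (LinearMap.range p).zero_mem
        · exact ⟨⟨(kDeo br a b, 0),
            Submodule.subset_span (by rw [hGdef]; exact Set.mem_union_right _ ⟨a, b, rfl⟩)⟩, rfl⟩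
        · exact ⟨⟨(kDoo br a b, a*b),
            Submodule.subset_span (by rw [hGdef]; exact Set.mem_union_left _ ⟨a, b, rfl⟩)⟩, rfl⟩
    let g := lam.comp ((LinearMap.snd F (A × A → A × A) A).comp W.subtype)
    let gbar := (LinearMap.ker p).liftQ g hker
    let e := p.quotKerEquivRange
    let μ : kInder F br →ₗ[F] F :=
      (gbar.comp e.symm.toLinearMap).comp (Submodule.inclusion hrange.ge)
    have key : ∀ (w : W) (h : (w : (A × A → A × A) × A).1 ∈ kInder F br),
        μ ⟨(w : (A × A → A × A) × A).1, h⟩ = lam (w : (A × A → A × A) × A).2 := by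
      intro w h
      have h1 : (Submodule.inclusion hrange.ge ⟨(w : (A × A → A × A) × A).1, h⟩ :
          LinearMap.range p) = e (Submodule.Quotient.mk w) := by
        apply Subtype.ext
        rw [LinearMap.quotKerEquivRange_apply_mk]
        rfl
      show gbar (e.symm (Submodule.inclusion hrange.ge ⟨_, h⟩)) = _
      rw [h1, LinearEquiv.symm_apply_apply]
      rfl
    refine ⟨μ, ?_, ?_, ?_⟩
    · intro a b
      have h0 : ∀ hm : kDee br a b ∈ kInder F br, (⟨kDee br a b, hm⟩ : kInder F br) = 0 :=
        fun hm => Subtype.ext (kDee_eq_zero br a b)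
      erw [h0, map_zero]
      simp
    · intro a b
      simp only [LinearMap.zero_apply]
      exact ((key ⟨(kDeo br a b, 0),
          Submodule.subset_span (by rw [hGdef]; exact Set.mem_union_right _ ⟨a, b, rfl⟩)⟩
        (Submodule.subset_span (Set.mem_union_left _ (Set.mem_union_right _ ⟨a, b, rfl⟩)))).trans
        (map_zero lam)).symm
    · intro a b
      have hk := key ⟨(kDoo br a b, a*b),
          Submodule.subset_span (by rw [hGdef]; exact Set.mem_union_left _ ⟨a, b, rfl⟩)⟩
        (Submodule.subset_span (Set.mem_union_right _ ⟨a, b, rfl⟩))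
      simpa using hk.symm
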